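/- Let μ > 0, λ : ℝ → ℝ continuous with Λℓ ≤ λ ≤ Λu, and for S₀ ≥ 0 let S(t; S₀) = S₀ e^{-μ t} + ∫_{-t}^{0} λ(s) e^{μ s} ds (the pullback solution at time 0 started at time -t). Then S(t; S₀) → S* := ∫_{-∞}^{0} λ(s) e^{μ s} ds as t → ∞, uniformly for S₀ in any bounded subset of [0,∞). -/

import Mathlib

open Real Filter MeasureTheory Topology

lemma exp_mul_integrableOn_Iic {μ : ℝ} (hμ : 0 < μ) (a : ℝ) :
    IntegrableOn (fun s => Real.exp (μ * s)) (Set.Iic a) := by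
  have hcont : Continuous fun s : ℝ => Real.exp (μ * s) :=
    Real.continuous_exp.comp (continuous_const.mul continuous_id)
  refine integrableOn_Iic_of_intervalIntegral_norm_bounded (Real.exp (μ * a) / μ) a
    (fun y : ℝ => hcont.integrableOn_Ioc) tendsto_id ?_
  filter_upwards [Iic_mem_atBot a] with y (hy : y ≤ a)
  simp only [id_eq]
  have hcalc : ∫ x in y..a, Real.exp (μ * x)
      = μ⁻¹ • (Real.exp (μ * a) - Real.exp (μ * y)) := by
    rw [intervalIntegral.integral_comp_mul_left (fun x => Real.exp x) hμ.ne',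
      integral_exp]
  simp only [Real.norm_eq_abs, abs_of_nonneg (Real.exp_pos _).le]
  rw [hcalc, smul_eq_mul, div_eq_inv_mul]
  have : Real.exp (μ * a) - Real.exp (μ * y) ≤ Real.exp (μ * a) := by
    have := (Real.exp_pos (μ * y)).le; linarith
  exact mul_le_mul_of_nonneg_left this (inv_nonneg.mpr hμ.le)

lemma integral_exp_mul_Iic' {μ : ℝ} (hμ : 0 < μ) (a : ℝ) :
    ∫ s in Set.Iic a, Real.exp (μ * s) = Real.exp (μ * a) / μ := by
  refine tendsto_nhds_unique
    (intervalIntegral_tendsto_integral_Iic a (exp_mul_integrableOn_Iic hμ a) tendsto_id) ?_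
  have hcalc : ∀ y : ℝ, ∫ x in y..a, Real.exp (μ * x)
      = (Real.exp (μ * a) - Real.exp (μ * y)) / μ := by
    intro y
    rw [intervalIntegral.integral_comp_mul_left (fun x => Real.exp x) hμ.ne',
      integral_exp, smul_eq_mul]
    ring
  simp_rw [hcalc]
  have h1 : Tendsto (fun y : ℝ => Real.exp (μ * y)) atBot (𝓝 0) :=
    Real.tendsto_exp_atBot.comp (tendsto_id.const_mul_atBot hμ)
  have h2 : Tendsto (fun y : ℝ => (Real.exp (μ * a) - Real.exp (μ * y)) / μ) atBot
      (𝓝 ((Real.exp (μ * a) - 0) / μ)) :=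
    (Tendsto.sub (tendsto_const_nhds (x := Real.exp (μ * a))) h1).div_const μ
  simpa using h2

theorem stmt3 (μ Λℓ Λu : ℝ) (l : ℝ → ℝ)
    (hμ : 0 < μ) (hl : Continuous l) (hΛℓ : 0 < Λℓ) (hΛ : Λℓ ≤ Λu)
    (hbound : ∀ s, Λℓ ≤ l s ∧ l s ≤ Λu)
    (K : Set ℝ) (hK : K ⊆ Set.Ici 0) (hKb : Bornology.IsBounded K) :
    TendstoUniformlyOn
      (fun t S₀ => S₀ * Real.exp (-μ * t) + ∫ s in (-t)..0, l s * Real.exp (μ * s))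
      (fun _ => ∫ s in Set.Iic (0 : ℝ), l s * Real.exp (μ * s)) atTop K := by
  set g : ℝ → ℝ := fun s => l s * Real.exp (μ * s) with hg
  have hgc : Continuous g :=
    hl.mul (Real.continuous_exp.comp (continuous_const.mul continuous_id))
  have hgnn : ∀ s, 0 ≤ g s := fun s =>
    mul_nonneg (hΛℓ.le.trans (hbound s).1) (Real.exp_pos _).le
  have hgint : ∀ a : ℝ, IntegrableOn g (Set.Iic a) := by
    intro a
    refine Integrable.mono ((exp_mul_integrableOn_Iic hμ a).const_mul Λu)
      hgc.aestronglyMeasurable.restrict ?_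
    filter_upwards with s
    have hgs : g s = l s * Real.exp (μ * s) := rfl
    rw [Real.norm_eq_abs, hgs]
    have h2 := (hbound s).2
    have hΛu : 0 ≤ Λu := le_trans hΛℓ.le (le_trans (hbound s).1 h2)
    simp only [Real.norm_eq_abs, abs_mul, abs_of_nonneg (Real.exp_pos (μ * s)).le,
      abs_of_nonneg (hΛℓ.le.trans (hbound s).1), abs_of_nonneg hΛu]
    exact mul_le_mul_of_nonneg_right h2 (Real.exp_pos _).le
  have hbd : ∀ a : ℝ, |∫ s in Set.Iic a, g s| ≤ Λu / μ * Real.exp (μ * a) := by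
    intro a
    rw [abs_of_nonneg (setIntegral_nonneg measurableSet_Iic fun s _ => hgnn s)]
    calc ∫ s in Set.Iic a, g s
        ≤ ∫ s in Set.Iic a, Λu * Real.exp (μ * s) := by
          refine setIntegral_mono_on (hgint a)
            ((exp_mul_integrableOn_Iic hμ a).const_mul Λu) measurableSet_Iic ?_
          exact fun s _ => mul_le_mul_of_nonneg_right (hbound s).2 (Real.exp_pos _).le
      _ = Λu / μ * Real.exp (μ * a) := by
          rw [integral_const_mul, integral_exp_mul_Iic' hμ]; ring
  obtain ⟨C, hC⟩ := (isBounded_iff_forall_norm_le).mp hKb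
  set C' : ℝ := max C 0 with hC'
  have hC'0 : 0 ≤ C' := le_max_right _ _
  rw [Metric.tendstoUniformlyOn_iff]
  intro ε hε
  have hlim : Tendsto (fun t : ℝ => (C' + Λu / μ) * Real.exp (-μ * t)) atTop (𝓝 0) := by
    have h0 : Tendsto (fun t : ℝ => -μ * t) atTop atBot := by
      have := tendsto_neg_atTop_atBot.comp
        (Tendsto.const_mul_atTop hμ (tendsto_id (α := ℝ) (x := atTop)))
      simpa [Function.comp_def, neg_mul] using this
    have h1 : Tendsto (fun t : ℝ => Real.exp (-μ * t)) atTop (𝓝 0) :=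
      Real.tendsto_exp_atBot.comp h0
    simpa using h1.const_mul (C' + Λu / μ)
  filter_upwards [hlim.eventually (gt_mem_nhds hε)] with t hlt S₀ hS₀
  have hsplit : ∫ s in (-t)..0, g s
      = (∫ s in Set.Iic (0 : ℝ), g s) - ∫ s in Set.Iic (-t), g s :=
    (intervalIntegral.integral_Iic_sub_Iic (hgint _) (hgint _)).symm
  have hS₀C : |S₀| ≤ C' := le_trans (by simpa using hC S₀ hS₀) (le_max_left _ _)
  rw [Real.dist_eq]
  have key : |(∫ s in Set.Iic (0:ℝ), g s)
      - (S₀ * Real.exp (-μ * t) + ∫ s in (-t)..0, g s)|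
      ≤ (C' + Λu / μ) * Real.exp (-μ * t) := by
    rw [hsplit]
    have h1 : |(∫ s in Set.Iic (0:ℝ), g s)
        - (S₀ * Real.exp (-μ * t) + ((∫ s in Set.Iic (0:ℝ), g s) - ∫ s in Set.Iic (-t), g s))|
        = |(∫ s in Set.Iic (-t), g s) - S₀ * Real.exp (-μ * t)| := by
      congr 1; ring
    rw [h1]
    calc |(∫ s in Set.Iic (-t), g s) - S₀ * Real.exp (-μ * t)|
        ≤ |∫ s in Set.Iic (-t), g s| + |S₀ * Real.exp (-μ * t)| := abs_sub _ _
      _ ≤ Λu / μ * Real.exp (μ * (-t)) + C' * Real.exp (-μ * t) := by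
          refine add_le_add (hbd _) ?_
          rw [abs_mul, abs_of_nonneg (Real.exp_pos _).le]
          exact mul_le_mul_of_nonneg_right hS₀C (Real.exp_pos _).le
      _ = (C' + Λu / μ) * Real.exp (-μ * t) := by rw [show μ * -t = -μ * t from by ring]; ring
  exact lt_of_le_of_lt key hlt
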